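/- Let $(A_n)$ be a sequence of events with $P(A_n) \to 0$, and let $m \geq 0$ be a fixed integer. If $\sum_{n=1}^\infty P(A_n \cap A_{n+1}^c \cap \cdots \cap A_{n+m}^c) < \infty$, then $P(\limsup_n A_n) = 0$. -/

import Mathlib

open MeasureTheory Filter Set

private lemma stepanov_chain {Ω : Type*} (A : ℕ → Set Ω) (m n : ℕ) (ω : Ω)
    (hB : ∀ k, n ≤ k → ω ∉ A k ∩ ⋂ j ∈ Finset.Icc 1 m, (A (k + j))ᶜ) :
    ∀ d k, n ≤ k → ω ∈ A k → ω ∈ ⋃ j ∈ Finset.Icc 1 m, A (k + d + j) := by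
  intro d
  induction d using Nat.strong_induction_on with
  | _ d ih =>
    intro k hk hωk
    have hnot := hB k hk
    have : ¬ ω ∈ ⋂ j ∈ Finset.Icc 1 m, (A (k + j))ᶜ := fun hmem => hnot ⟨hωk, hmem⟩
    simp only [mem_iInter, mem_compl_iff, not_forall, not_not] at this
    obtain ⟨j, hj, hωj⟩ := this
    obtain ⟨hj1, hjm⟩ := Finset.mem_Icc.mp hj
    by_cases hjd : j ≤ d
    · have hlt : d - j < d := Nat.sub_lt_of_pos_le hj1 hjd
      have := ih (d - j) hlt (k + j) (le_trans hk (Nat.le_add_right _ _)) hωj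
      have harith : k + j + (d - j) = k + d := by omega
      rwa [harith] at this
    · refine mem_iUnion₂.mpr ⟨j - d, Finset.mem_Icc.mpr ⟨by omega, by omega⟩, ?_⟩
      have : k + d + (j - d) = k + j := by omega
      rwa [this]

theorem stepanov_main {Ω : Type*} [MeasurableSpace Ω] (μ : Measure Ω)
    [IsProbabilityMeasure μ] (A : ℕ → Set Ω) (hA : ∀ n, MeasurableSet (A n))
    (m : ℕ)
    (h0 : Tendsto (fun n => μ (A n)) atTop (nhds 0))
    (h : ∑' n, μ (A n ∩ ⋂ j ∈ Finset.Icc 1 m, (A (n + j))ᶜ) < ⊤) :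
    μ (limsup A atTop) = 0 := by
  set B : ℕ → Set Ω := fun n => A n ∩ ⋂ j ∈ Finset.Icc 1 m, (A (n + j))ᶜ with hBdef
  set W : ℕ → Set Ω := fun N => ⋃ j ∈ Finset.Icc 1 m, A (N + j) with hWdef
  -- μ (W N) → 0
  have hWto : Tendsto (fun N => μ (W N)) atTop (nhds 0) := by
    have hg : Tendsto (fun N => ∑ j ∈ Finset.Icc 1 m, μ (A (N + j))) atTop (nhds 0) := by
      have := tendsto_finset_sum (Finset.Icc 1 m)
        (fun j _ => h0.comp (tendsto_add_atTop_nat j))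
      simpa using this
    exact tendsto_of_tendsto_of_tendsto_of_le_of_le tendsto_const_nhds hg
      (fun N => zero_le) (fun N => measure_biUnion_finset_le _ _)
  -- D is null
  set D : Set Ω := ⋃ k, ⋂ N, W (N + k) with hDdef
  have hD : μ D = 0 := by
    have hterm : ∀ k, μ (⋂ N, W (N + k)) = 0 := by
      intro k
      refine le_antisymm ?_ zero_le
      refine ge_of_tendsto' (hWto.comp (tendsto_add_atTop_nat k))
        fun N => measure_mono (iInter_subset _ N)
    refine le_antisymm ?_ zero_le
    calc μ D ≤ ∑' k, μ (⋂ N, W (N + k)) := measure_iUnion_le _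
      _ = 0 := by simp [hterm]
  -- key inclusion
  have hincl : ∀ n, limsup A atTop ⊆ (⋃ k, B (k + n)) ∪ D := by
    intro n ω hω
    by_cases hωB : ω ∈ ⋃ k, B (k + n)
    · exact Or.inl hωB
    right
    have hB : ∀ k, n ≤ k → ω ∉ B k := by
      intro k hk hmem
      exact hωB (mem_iUnion.mpr ⟨k - n, by rwa [Nat.sub_add_cancel hk]⟩)
    have hfreq : ∃ᶠ i in atTop, ω ∈ A i := mem_limsup_iff_frequently_mem.mp hω
    obtain ⟨k, hkn, hωk⟩ := (frequently_atTop.mp hfreq) n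
    refine mem_iUnion.mpr ⟨k, mem_iInter.mpr fun N => ?_⟩
    have := stepanov_chain A m n ω hB N k hkn hωk
    simpa [hWdef, Nat.add_comm] using this
  -- conclude
  have hbound : ∀ n, μ (limsup A atTop) ≤ ∑' k, μ (B (k + n)) := by
    intro n
    calc μ (limsup A atTop) ≤ μ ((⋃ k, B (k + n)) ∪ D) := measure_mono (hincl n)
      _ ≤ μ (⋃ k, B (k + n)) + μ D := measure_union_le _ _
      _ = μ (⋃ k, B (k + n)) := by rw [hD, add_zero]
      _ ≤ ∑' k, μ (B (k + n)) := measure_iUnion_le _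
  have htail : Tendsto (fun n => ∑' k, μ (B (k + n))) atTop (nhds 0) :=
    ENNReal.tendsto_sum_nat_add (fun k => μ (B k)) h.ne
  exact le_antisymm (ge_of_tendsto' htail hbound) zero_le
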